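/- Let R be a Noetherian commutative ring, M a weakly Laskerian R-module, and T a Noetherian commutative R-algebra that has only finitely many maximal ideals and is integral over R. Then M ⊗_R T is a weakly Laskerian T-module. -/

import Mathlib

open Submodule

section SpBasics

variable {R : Type*} [CommRing R]

/-- A support-like set defined via annihilators of elements. -/
def spSet (R X : Type*) [CommRing R] [AddCommGroup X] [Module R X] : Set (Ideal R) :=
  {p | p.IsPrime ∧ ∃ x : X, (R ∙ x).annihilator ≤ p}

variable {X Y : Type*} [AddCommGroup X] [Module R X] [AddCommGroup Y] [Module R Y]

lemma spSet_subset_of_surjective (f : X →ₗ[R] Y) (hf : Function.Surjective f) :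
    spSet R Y ⊆ spSet R X := by
  rintro p ⟨hp, y, hy⟩
  obtain ⟨x, rfl⟩ := hf y
  refine ⟨hp, x, le_trans ?_ hy⟩
  intro r hr
  rw [Submodule.mem_annihilator_span_singleton] at hr ⊢
  rw [← map_smul, hr, map_zero]

lemma spSet_eq_of_equiv (e : X ≃ₗ[R] Y) : spSet R X = spSet R Y :=
  le_antisymm (spSet_subset_of_surjective (e.symm : Y →ₗ[R] X) e.symm.surjective)
    (spSet_subset_of_surjective (e : X →ₗ[R] Y) e.surjective)

lemma ann_eq_colon (x : X) : (R ∙ x).annihilator = (⊥ : Submodule R X).colon {x} := by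
  ext r
  rw [Submodule.mem_annihilator_span_singleton, Submodule.mem_colon_singleton, Submodule.mem_bot]

lemma isAssociatedPrime_iff_ann [IsNoetherianRing R] {p : Ideal R} :
    IsAssociatedPrime p X ↔ p.IsPrime ∧ ∃ x : X, p = (R ∙ x).annihilator := by
  rw [_root_.isAssociatedPrime_iff]
  simp only [ann_eq_colon]

lemma assoc_mem_spSet {p : Ideal R} (h : IsAssociatedPrime p X) : p ∈ spSet R X := by
  obtain ⟨hp, x, rfl⟩ := h; exact ⟨hp, x, (ann_eq_colon x).le.trans Ideal.le_radical⟩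

lemma two_avoid {J K₁ K₂ : Ideal R} (h₁ : ¬ J ≤ K₁) (h₂ : ¬ J ≤ K₂) :
    ∃ r ∈ J, r ∉ K₁ ∧ r ∉ K₂ := by
  obtain ⟨a, haJ, ha1⟩ := SetLike.not_le_iff_exists.mp h₁
  obtain ⟨b, hbJ, hb2⟩ := SetLike.not_le_iff_exists.mp h₂
  by_cases hab : a ∈ K₂
  · by_cases hba : b ∈ K₁
    · refine ⟨a + b, add_mem haJ hbJ, fun h => ha1 ?_, fun h => hb2 ?_⟩
      · simpa using sub_mem h hba
      · simpa using sub_mem h hab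
    · exact ⟨b, hbJ, hba, hb2⟩
  · exact ⟨a, haJ, ha1, hab⟩

lemma exists_pow_escape {I p : Ideal R} (hp : p ∈ I.minimalPrimes) {a : R} (ha : a ∈ p) :
    ∃ (n : ℕ) (s : R), s ∉ p ∧ s * a ^ n ∈ I := by
  by_contra hcon
  push_neg at hcon
  have hprime : p.IsPrime := hp.1.1
  set U : Submonoid R :=
    { carrier := {x | ∃ (n : ℕ) (s : R), s ∉ p ∧ x = s * a ^ n}
      one_mem' := ⟨0, 1, fun h => hprime.ne_top (Ideal.eq_top_of_isUnit_mem p h isUnit_one),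
        by simp⟩
      mul_mem' := by
        rintro x y ⟨n, s, hs, rfl⟩ ⟨m, t, ht, rfl⟩
        refine ⟨n + m, s * t, fun h => ?_, by ring⟩
        rcases hprime.mem_or_mem h with h | h
        exacts [hs h, ht h] } with hU
  have hdisj : Disjoint (I : Set R) (U : Set R) := by
    rw [Set.disjoint_left]
    rintro x hxI ⟨n, s, hs, rfl⟩
    exact hs (False.elim (hcon n s hs hxI))
  obtain ⟨q, hq, hIq, hdq⟩ := Ideal.exists_le_prime_disjoint I U hdisj
  have hqp : q ≤ p := by
    intro x hx
    by_contra hxp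
    exact Set.disjoint_left.mp hdq hx ⟨0, x, hxp, by simp⟩
  have haq : a ∉ q := fun h =>
    Set.disjoint_left.mp hdq h ⟨1, 1, fun h1 => hprime.ne_top (Ideal.eq_top_of_isUnit_mem p h1 isUnit_one), by ring⟩
  exact haq (hp.2 ⟨hq, hIq⟩ hqp ha)

end SpBasics
open Submodule

section MinAssoc

variable {R : Type*} [CommRing R] {X : Type*} [AddCommGroup X] [Module R X]

lemma isAssociatedPrime_of_mem_minimalPrimes [IsNoetherianRing R] {x : X} {p : Ideal R}
    (hp : p ∈ ((R ∙ x).annihilator).minimalPrimes) : IsAssociatedPrime p X := by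
  classical
  set I : Ideal R := (R ∙ x).annihilator with hIdef
  have hprime : p.IsPrime := hp.1.1
  have hIp : I ≤ p := hp.1.2
  have hone : (1 : R) ∉ p := fun h => hprime.ne_top (Ideal.eq_top_of_isUnit_mem p h isUnit_one)
  -- saturation of I at p
  set I' : Ideal R :=
    { carrier := {r | ∃ s, s ∉ p ∧ s * r ∈ I}
      zero_mem' := ⟨1, hone, by simpa using zero_mem I⟩
      add_mem' := by
        rintro r₁ r₂ ⟨s₁, hs₁, h₁⟩ ⟨s₂, hs₂, h₂⟩
        refine ⟨s₁ * s₂, fun h => ?_, ?_⟩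
        · rcases hprime.mem_or_mem h with h | h
          exacts [hs₁ h, hs₂ h]
        · have : s₁ * s₂ * (r₁ + r₂) = s₂ * (s₁ * r₁) + s₁ * (s₂ * r₂) := by ring
          rw [this]
          exact add_mem (I.mul_mem_left _ h₁) (I.mul_mem_left _ h₂)
      smul_mem' := by
        rintro c r ⟨s, hs, h⟩
        refine ⟨s, hs, ?_⟩
        have : s * (c • r) = c * (s * r) := by simp [smul_eq_mul]; ring
        rw [this]
        exact I.mul_mem_left _ h } with hI'def
  have hII' : I ≤ I' := fun r hr => ⟨1, hone, by simpa using hr⟩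
  have hI'p : I' ≤ p := by
    rintro r ⟨s, hs, hsr⟩
    exact (hprime.mem_or_mem (hIp hsr)).resolve_left hs
  have honeI' : (1 : R) ∉ I' := fun h => hone (hI'p h)
  -- maximal colon ideal
  obtain ⟨J, ⟨c, hc, hJc⟩, hmax⟩ :=
    set_has_maximal_iff_noetherian.mpr (by infer_instance)
      {J : Ideal R | ∃ c : R, c ∉ I' ∧ J = I'.colon (Submodule.span R {c})}
      ⟨I'.colon (Submodule.span R {(1 : R)}), 1, honeI', rfl⟩
  have hmemJ : ∀ r, r ∈ J ↔ r * c ∈ I' := by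
    intro r; rw [hJc, Submodule.mem_colon_span_singleton, smul_eq_mul]
  -- J ≤ p
  have hJp : J ≤ p := by
    intro u hu
    rw [hmemJ] at hu
    obtain ⟨s, hs, hsu⟩ := hu
    by_contra hup
    exact hc ⟨s * u, fun h => (hprime.mem_or_mem h).elim hs hup, by rwa [mul_assoc]⟩
  -- p ≤ J
  have hpJ : p ≤ J := by
    intro a ha
    obtain ⟨n, s, hs, hsa⟩ := exists_pow_escape hp ha
    have hanI' : a ^ n * c ∈ I' := Ideal.mul_mem_right _ _ ⟨s, hs, hsa⟩
    have hex : ∃ k, a ^ k * c ∈ I' := ⟨n, hanI'⟩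
    set k0 := Nat.find hex with hk0
    have hk0mem : a ^ k0 * c ∈ I' := Nat.find_spec hex
    have hk0pos : k0 ≠ 0 := by
      intro h
      apply hc
      simpa [h] using hk0mem
    obtain ⟨k1, hk1⟩ := Nat.exists_eq_succ_of_ne_zero hk0pos
    have hk1not : a ^ k1 * c ∉ I' := Nat.find_min hex (by omega)
    -- colon of a^k1 * c
    have hle : J ≤ I'.colon (Submodule.span R {a ^ k1 * c}) := by
      intro r hr
      rw [Submodule.mem_colon_span_singleton, smul_eq_mul]
      rw [hmemJ] at hr
      have : r * (a ^ k1 * c) = a ^ k1 * (r * c) := by ring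
      rw [this]
      exact Ideal.mul_mem_left _ _ hr
    have heq : I'.colon (Submodule.span R {a ^ k1 * c}) = J := by
      by_contra hne
      exact hmax _ ⟨a ^ k1 * c, hk1not, rfl⟩ (lt_of_le_of_ne hle (Ne.symm hne))
    rw [← heq, Submodule.mem_colon_span_singleton, smul_eq_mul]
    have : a * (a ^ k1 * c) = a ^ k0 * c := by rw [hk1, pow_succ]; ring
    rw [this]
    exact hk0mem
  have hJeq : J = p := le_antisymm hJp hpJ
  -- produce clearing element t
  have hclear : ∀ (s : Finset R), (∀ a ∈ s, a * c ∈ I') →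
      ∃ t, t ∉ p ∧ ∀ a ∈ s, t * (a * c) ∈ I := by
    intro s
    induction s using Finset.induction_on with
    | empty => exact fun _ => ⟨1, hone, by simp⟩
    | @insert a s ha IH =>
      intro hmem
      obtain ⟨t, htp, htI⟩ := IH (fun b hb => hmem b (Finset.mem_insert_of_mem hb))
      obtain ⟨sa, hsap, hsaI⟩ := hmem a (Finset.mem_insert_self a s)
      refine ⟨sa * t, fun h => (hprime.mem_or_mem h).elim hsap htp, ?_⟩
      intro b hb
      rcases Finset.mem_insert.mp hb with rfl | hb
      · have : sa * t * (b * c) = t * (sa * (b * c)) := by ring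
        rw [this]
        exact I.mul_mem_left _ hsaI
      · have : sa * t * (b * c) = sa * (t * (b * c)) := by ring
        rw [this]
        exact I.mul_mem_left _ (htI b hb)
  obtain ⟨g, hg⟩ := IsNoetherian.noetherian p
  have hgen : ∀ a ∈ g, a * c ∈ I' := by
    intro a hag
    have : a ∈ p := by rw [← hg]; exact Submodule.subset_span hag
    rw [← hmemJ a, hJeq]; exact this
  obtain ⟨t, htp, htI⟩ := hclear g hgen
  refine isAssociatedPrime_iff_ann.mpr ⟨hprime, (t * c) • x, ?_⟩
  have hannx : ∀ u : R, u ∈ I ↔ u • x = 0 := fun u => Submodule.mem_annihilator_span_singleton _ _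
  apply le_antisymm
  · -- p ≤ ann
    have hsp : Submodule.span R (g : Set R) ≤ (R ∙ (t * c) • x).annihilator := by
      rw [Submodule.span_le]
      intro a hag
      rw [SetLike.mem_coe, Submodule.mem_annihilator_span_singleton, smul_smul, ← hannx]
      have : a * (t * c) = t * (a * c) := by ring
      rw [this]
      exact htI a hag
    rw [hg] at hsp
    exact hsp
  · -- ann ≤ p
    intro r hr
    rw [Submodule.mem_annihilator_span_singleton, smul_smul, ← hannx] at hr
    have hrI' : r * (t * c) ∈ I' := hII' hr
    have : (r * t) * c ∈ I' := by rwa [mul_assoc]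
    have hrtJ : r * t ∈ J := (hmemJ _).mpr this
    rw [hJeq] at hrtJ
    exact (hprime.mem_or_mem hrtJ).resolve_right htp

lemma exists_assoc_le_of_mem_spSet [IsNoetherianRing R] {q : Ideal R} (hq : q ∈ spSet R X) :
    ∃ p ∈ associatedPrimes R X, p ≤ q := by
  obtain ⟨hqp, x, hx⟩ := hq
  haveI := hqp
  obtain ⟨p, hp, hpq⟩ := Ideal.exists_minimalPrimes_le (I := (R ∙ x).annihilator) hx
  exact ⟨p, isAssociatedPrime_of_mem_minimalPrimes hp, hpq⟩

end MinAssoc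
open Submodule

section AssFinite

variable {R : Type*} [CommRing R] {X : Type*} [AddCommGroup X] [Module R X]

lemma assoc_subset_union [IsNoetherianRing R] (A : Submodule R X) :
    associatedPrimes R X ⊆ associatedPrimes R A ∪ associatedPrimes R (X ⧸ A) := by
  intro p hp0
  obtain ⟨hp, x, rfl⟩ := isAssociatedPrime_iff_ann.mp hp0
  by_cases hcase : ∃ r : R, r • x ∈ A ∧ r • x ≠ 0
  · left
    obtain ⟨r, hrA, hrne⟩ := hcase
    have hrp : r ∉ (R ∙ x).annihilator := fun h => hrne ((mem_annihilator_span_singleton x r).mp h)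
    refine isAssociatedPrime_iff_ann.mpr ⟨hp, ⟨r • x, hrA⟩, ?_⟩
    ext u
    rw [Submodule.mem_annihilator_span_singleton, Submodule.mem_annihilator_span_singleton]
    have hval : (u • (⟨r • x, hrA⟩ : A) : A) = ⟨u • (r • x), A.smul_mem u hrA⟩ := rfl
    rw [hval]
    constructor
    · intro hu
      rw [Subtype.ext_iff]
      show u • (r • x) = 0
      rw [smul_smul, mul_comm, mul_smul, hu, smul_zero]
    · intro hu
      have : (u * r) • x = 0 := by
        rw [mul_smul]; exact congrArg Subtype.val hu
      have hur : u * r ∈ (R ∙ x).annihilator := (mem_annihilator_span_singleton x _).mpr this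
      have := (hp.mem_or_mem hur).resolve_right hrp
      exact (mem_annihilator_span_singleton x u).mp this
  · right
    push_neg at hcase
    refine isAssociatedPrime_iff_ann.mpr ⟨hp, Submodule.Quotient.mk x, ?_⟩
    ext u
    rw [Submodule.mem_annihilator_span_singleton, Submodule.mem_annihilator_span_singleton,
      ← Submodule.Quotient.mk_smul, Submodule.Quotient.mk_eq_zero]
    constructor
    · intro hu; rw [hu]; exact A.zero_mem
    · exact fun hu => hcase u hu

lemma assoc_span_singleton_subset [IsNoetherianRing R] {y : X}
    (hy : ((R ∙ y).annihilator).IsPrime) :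
    associatedPrimes R ↥(R ∙ y) ⊆ {(R ∙ y).annihilator} := by
  intro q hq0
  obtain ⟨hq, z, rfl⟩ := isAssociatedPrime_iff_ann.mp hq0
  obtain ⟨r, hr⟩ := Submodule.mem_span_singleton.mp z.2
  by_cases hz : (z : X) = 0
  · exfalso
    apply hq.ne_top
    have : z = 0 := Subtype.ext hz
    rw [this, Submodule.span_singleton_eq_bot.mpr rfl, Submodule.annihilator_bot]
  · have hrann : r ∉ (R ∙ y).annihilator := by
      intro h
      exact hz (by rw [← hr]; exact (mem_annihilator_span_singleton y r).mp h)
    have : (R ∙ z).annihilator = (R ∙ y).annihilator := by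
      ext u
      rw [Submodule.mem_annihilator_span_singleton, Submodule.mem_annihilator_span_singleton]
      constructor
      · intro hu
        have : (u * r) • y = 0 := by
          rw [mul_smul, hr]
          exact congrArg Subtype.val hu
        have hur := (mem_annihilator_span_singleton y _).mpr this
        exact (mem_annihilator_span_singleton y u).mp ((hy.mem_or_mem hur).resolve_right hrann)
      · intro hu
        rw [Subtype.ext_iff]
        show u • (z : X) = 0
        rw [← hr, smul_smul, mul_comm, mul_smul, hu, smul_zero]
    rw [this]
    rfl

lemma associatedPrimes_finite_of_noetherian [IsNoetherianRing R] (X : Type*) [AddCommGroup X]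
    [Module R X] [Module.Finite R X] : (associatedPrimes R X).Finite := by
  haveI : IsNoetherian R X := inferInstance
  have key : ∀ N : Submodule R X, (associatedPrimes R (X ⧸ N)).Finite := by
    intro N
    refine IsNoetherian.induction (P := fun N => (associatedPrimes R (X ⧸ N)).Finite) ?_ N
    intro N IH
    by_cases hN : N = ⊤
    · haveI : Subsingleton (X ⧸ N) := by subst hN; infer_instance
      rw [associatedPrimes.eq_empty_of_subsingleton]
      exact Set.finite_empty
    · by_cases htriv : Subsingleton (X ⧸ N)
      · rw [associatedPrimes.eq_empty_of_subsingleton]; exact Set.finite_empty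
      haveI : Nontrivial (X ⧸ N) := not_subsingleton_iff_nontrivial.mp htriv
      obtain ⟨p, hp⟩ := associatedPrimes.nonempty R (X ⧸ N)
      obtain ⟨hprime, xb, hann⟩ := isAssociatedPrime_iff_ann.mp hp
      obtain ⟨x, rfl⟩ := Submodule.Quotient.mk_surjective N xb
      have hx : x ∉ N := by
        intro h
        apply hprime.ne_top
        rw [hann, (Submodule.Quotient.mk_eq_zero N).mpr h,
          Submodule.span_singleton_eq_bot.mpr rfl, Submodule.annihilator_bot]
      set N' := N ⊔ R ∙ x with hN'
      have hlt : N < N' := by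
        refine lt_of_le_of_ne le_sup_left (fun h => hx ?_)
        rw [h]
        exact (le_sup_right : (R ∙ x) ≤ N ⊔ R ∙ x) (Submodule.mem_span_singleton_self x)
      have fin' := IH N' hlt
      have hmapbot : N.map N.mkQ = ⊥ := by
        rw [eq_bot_iff]
        rintro z ⟨y, hy, rfl⟩
        simpa [Submodule.Quotient.mk_eq_zero] using hy
      have hmap : N'.map N.mkQ = (R ∙ (Submodule.Quotient.mk x : X ⧸ N)) := by
        rw [hN', Submodule.map_sup, hmapbot, bot_sup_eq, Submodule.map_span,
          Set.image_singleton]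
        rfl
      have hsub := assoc_subset_union (R := R) (X := X ⧸ N)
        (R ∙ (Submodule.Quotient.mk x : X ⧸ N))
      have h1 : associatedPrimes R ↥(R ∙ (Submodule.Quotient.mk x : X ⧸ N)) ⊆ {p} := by
        have := assoc_span_singleton_subset (y := (Submodule.Quotient.mk x : X ⧸ N))
          (hann ▸ hprime)
        rwa [← hann] at this
      have h2 : associatedPrimes R ((X ⧸ N) ⧸ (R ∙ (Submodule.Quotient.mk x : X ⧸ N)))
          = associatedPrimes R (X ⧸ N') := by
        rw [← hmap]
        exact LinearEquiv.AssociatedPrimes.eq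
          (Submodule.quotientQuotientEquivQuotient N N' le_sup_left)
      refine Set.Finite.subset (Set.Finite.union (Set.finite_singleton p) fin') ?_
      refine hsub.trans (Set.union_subset_union h1 ?_)
      rw [h2]
  have := key ⊥
  rwa [LinearEquiv.AssociatedPrimes.eq (Submodule.quotEquivOfEqBot ⊥ rfl)] at this

end AssFinite
open Submodule

section GoodSeq

variable {R : Type*} [CommRing R]

lemma exists_good_seq [IsNoetherianRing R] (q₀ : Ideal R) :
    ∀ S : Set (Ideal R), (∀ x ∈ S, q₀ < x) → S.Infinite →
      ∃ f : ℕ → Ideal R, (∀ i, f i ∈ S) ∧ ∀ i j, i < j → ¬ f i ≤ f j := by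
  refine IsWellFounded.induction ((· > ·) : Ideal R → Ideal R → Prop)
    (motive := fun q₀ => ∀ S : Set (Ideal R), (∀ x ∈ S, q₀ < x) → S.Infinite →
      ∃ f : ℕ → Ideal R, (∀ i, f i ∈ S) ∧ ∀ i j, i < j → ¬ f i ≤ f j) q₀ ?_
  intro q IH S hlow hinf
  by_cases hc : ∃ q' ∈ S, {x ∈ S | q' < x}.Infinite
  · obtain ⟨q', hq'S, hinf'⟩ := hc
    obtain ⟨f, hf1, hf2⟩ := IH q' (hlow _ hq'S) {x ∈ S | q' < x}
      (fun x hx => hx.2) hinf'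
    exact ⟨f, fun i => (hf1 i).1, hf2⟩
  · push_neg at hc
    -- all cones finite; greedy construction
    let step : {A : Set (Ideal R) // A ⊆ S ∧ A.Infinite} → {A : Set (Ideal R) // A ⊆ S ∧ A.Infinite} :=
      fun A => ⟨A.1 \ ({A.2.2.nonempty.some} ∪ {x ∈ S | A.2.2.nonempty.some < x}),
        (Set.diff_subset).trans A.2.1,
        A.2.2.diff ((Set.finite_singleton _).union (hc _ (A.2.1 A.2.2.nonempty.some_mem)))⟩
    let C : ℕ → {A : Set (Ideal R) // A ⊆ S ∧ A.Infinite} := fun n => step^[n] ⟨S, le_refl S, hinf⟩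
    let f : ℕ → Ideal R := fun n => (C n).2.2.nonempty.some
    have hCsucc : ∀ n, C (n + 1) = step (C n) := fun n => Function.iterate_succ_apply' step n _
    have hfmem : ∀ n, f n ∈ (C n).1 := fun n => (C n).2.2.nonempty.some_mem
    have hstep : ∀ n, (C (n + 1)).1 = (C n).1 \ ({f n} ∪ {x ∈ S | f n < x}) := by
      intro n; rw [hCsucc n]
    have hmono : ∀ m n, m ≤ n → (C n).1 ⊆ (C m).1 := by
      intro m n hmn
      induction n, hmn using Nat.le_induction with
      | base => exact subset_rfl
      | succ n hmn IH2 =>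
        refine subset_trans ?_ IH2
        rw [hstep n]
        exact Set.diff_subset
    refine ⟨f, fun i => (C i).2.1 (hfmem i), ?_⟩
    intro i j hij hle
    have hj : f j ∈ (C (i + 1)).1 := hmono (i + 1) j hij (hfmem j)
    rw [hstep i] at hj
    have hnot := hj.2
    rcases lt_or_eq_of_le hle with hlt | heq
    · exact hnot (Or.inr ⟨(C j).2.1 (hfmem j), hlt⟩)
    · exact hnot (Or.inl (Set.mem_singleton_iff.mpr heq.symm))

variable {X : Type*} [AddCommGroup X] [Module R X]

lemma fg_smul_span [IsNoetherianRing R] (I : Ideal R) (x : X) : (I • (R ∙ x)).FG := by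
  have heq : I • (R ∙ x) = Submodule.map (LinearMap.toSpanSingleton R X x) I := by
    ext z
    rw [Submodule.mem_smul_span_singleton, Submodule.mem_map]
    simp only [LinearMap.toSpanSingleton_apply]
  rw [heq]
  exact (IsNoetherian.noetherian I).map _

lemma bad_cone_finite [IsNoetherianRing R]
    (hWL : ∀ N : Submodule R X, (associatedPrimes R (X ⧸ N)).Finite)
    {p : Ideal R} (hp : p.IsPrime)
    (hbad : ∀ N : Submodule R X, N.FG → ∃ x : X, ∀ r : R, r • x ∈ N ↔ r ∈ p) :
    {q : Ideal R | q.IsPrime ∧ p ≤ q}.Finite := by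
  by_contra hinf
  have hS : {q : Ideal R | q.IsPrime ∧ p < q}.Infinite := by
    intro hfin
    apply hinf
    refine (hfin.insert p).subset ?_
    rintro q ⟨hq, hpq⟩
    rcases eq_or_lt_of_le hpq with rfl | hlt
    · exact Set.mem_insert _ _
    · exact Set.mem_insert_of_mem _ ⟨hq, hlt⟩
  obtain ⟨f, hfS, hf⟩ := exists_good_seq p _ (fun x hx => hx.2) hS
  -- construct the chain of submodules
  let step : {N : Submodule R X // N.FG} → ℕ → {N : Submodule R X // N.FG} :=
    fun N k => ⟨N.1 ⊔ (f k) • (R ∙ (hbad N.1 N.2).choose), N.2.sup (fg_smul_span _ _)⟩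
  let C : ℕ → {N : Submodule R X // N.FG} :=
    fun n => Nat.rec ⟨⊥, Submodule.fg_bot⟩ (fun k Nk => step Nk k) n
  let x : ℕ → X := fun k => (hbad (C k).1 (C k).2).choose
  have hx : ∀ k, ∀ r : R, r • x k ∈ (C k).1 ↔ r ∈ p :=
    fun k => (hbad (C k).1 (C k).2).choose_spec
  have hCsucc : ∀ k, (C (k + 1)).1 = (C k).1 ⊔ (f k) • (R ∙ x k) := fun k => rfl
  have hmono : ∀ k l, k ≤ l → (C k).1 ≤ (C l).1 := by
    intro k l hkl
    induction l, hkl using Nat.le_induction with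
    | base => exact le_rfl
    | succ l hkl IH => exact IH.trans (by rw [hCsucc l]; exact le_sup_left)
  have hple : ∀ k, p ≤ f k := fun k => (hfS k).2.le
  -- key claim
  have key : ∀ k l, k < l → ∀ r : R, (r • x k ∈ (C l).1 ↔ r ∈ f k) := by
    intro k l hkl
    induction l, hkl using Nat.le_induction with
    | base =>
      intro r
      rw [hCsucc k]
      constructor
      · intro hr
        obtain ⟨n, hn, m, hm, hsum⟩ := Submodule.mem_sup.mp hr
        obtain ⟨κ, hκ, rfl⟩ := Submodule.mem_smul_span_singleton.mp hm
        have : (r - κ) • x k ∈ (C k).1 := by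
          rw [sub_smul]
          rw [← hsum]
          simpa using hn
        have hrκ : r - κ ∈ p := (hx k _).mp this
        have : r = (r - κ) + κ := by ring
        rw [this]
        exact (f k).add_mem (hple k hrκ) hκ
      · intro hr
        exact Submodule.mem_sup_right
          (Submodule.smul_mem_smul hr (Submodule.mem_span_singleton_self _))
    | succ l hkl IH =>
      intro r
      constructor
      · intro hr
        rw [hCsucc l] at hr
        obtain ⟨n, hn, m, hm, hsum⟩ := Submodule.mem_sup.mp hr
        obtain ⟨κ, hκ, rfl⟩ := Submodule.mem_smul_span_singleton.mp hm
        have hkp : ¬ f k ≤ p := (hfS k).2.not_ge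
        have hkl' : ¬ f k ≤ f l := hf k l hkl
        obtain ⟨r', hr'fk, hr'p, hr'fl⟩ := two_avoid hkp hkl'
        have h1 : (r' * r) • x k ∈ (C l).1 := by
          rw [mul_comm, mul_smul]
          exact Submodule.smul_mem _ r ((IH r').mpr hr'fk)
        have h2 : (r' * κ) • x l ∈ (C l).1 := by
          have : (r' * κ) • x l = (r' * r) • x k - r' • n := by
            rw [mul_smul, mul_smul, ← hsum, smul_add]
            abel
          rw [this]
          exact sub_mem h1 (Submodule.smul_mem _ _ hn)
        have hκp : κ ∈ p := ((hp.mem_or_mem ((hx l _).mp h2)).resolve_left hr'p)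
        have : r • x k = n + κ • x l := hsum.symm
        have hmem : r • x k ∈ (C l).1 := by
          rw [this]
          exact add_mem hn ((hx l κ).mpr hκp)
        exact (IH r).mp hmem
      · intro hr
        exact hmono l (l + 1) (Nat.le_succ l) ((IH r).mpr hr)
  -- the union
  let a : ℕ →o Submodule R X := ⟨fun k => (C k).1, fun k l hkl => hmono k l hkl⟩
  set K := ⨆ k, (C k).1 with hK
  have hKmem : ∀ z : X, z ∈ K ↔ ∃ k, z ∈ (C k).1 := fun z => Submodule.mem_iSup_of_chain a z
  have hassoc : ∀ k, f k ∈ associatedPrimes R (X ⧸ K) := by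
    intro k
    refine isAssociatedPrime_iff_ann.mpr ⟨(hfS k).1, Submodule.Quotient.mk (x k), ?_⟩
    ext r
    rw [Submodule.mem_annihilator_span_singleton, ← Submodule.Quotient.mk_smul,
      Submodule.Quotient.mk_eq_zero]
    rw [hKmem]
    constructor
    · intro hr
      exact (key k (k + 1) (Nat.lt_succ_self k) r).mpr hr |> fun h => ⟨k + 1, h⟩
    · rintro ⟨l, hl⟩
      have hl' : r • x k ∈ (C (max l (k + 1))).1 := hmono l _ (le_max_left _ _) hl
      exact (key k (max l (k + 1)) (lt_of_lt_of_le (Nat.lt_succ_self k) (le_max_right _ _)) r).mp hl'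
  have hinj : Function.Injective f := by
    intro i j hij
    rcases lt_trichotomy i j with h | h | h
    · exact absurd (hij ▸ le_rfl) (hf i j h)
    · exact h
    · exact absurd (hij ▸ le_rfl) (hf j i h)
  exact (hWL K).not_infinite (Set.infinite_of_injective_forall_mem hinj hassoc)

end GoodSeq
open Submodule

section Master

variable {R : Type*} [CommRing R]

lemma exists_le_of_sInf_le {s : Set (Ideal R)} (hs : s.Finite) {p : Ideal R} (hp : p.IsPrime)
    (h : sInf s ≤ p) : ∃ q ∈ s, q ≤ p := by
  refine Set.Finite.induction_on (motive := fun t _ => sInf t ≤ p → ∃ q ∈ t, q ≤ p) s hs ?_ ?_ h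
  · intro h0
    exfalso
    rw [sInf_empty] at h0
    exact hp.ne_top (top_le_iff.mp h0)
  · intro a t ha ht IH h0
    rw [sInf_insert] at h0
    have hmul : a * sInf t ≤ p := le_trans Ideal.mul_le_inf h0
    rcases hp.mul_le.mp hmul with h1 | h2
    · exact ⟨a, Set.mem_insert _ _, h1⟩
    · obtain ⟨q, hq, hqp⟩ := IH h2
      exact ⟨q, Set.mem_insert_of_mem _ hq, hqp⟩

lemma exists_minimal_le {s : Set (Ideal R)} (hs : s.Finite) {p : Ideal R} (hp : p ∈ s) :
    ∃ m, (m ∈ s ∧ ∀ q ∈ s, q ≤ m → q = m) ∧ m ≤ p := by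
  classical
  have hsub : {q ∈ s | q ≤ p}.Finite := hs.subset (Set.sep_subset _ _)
  obtain ⟨m, hm, hmax⟩ := Set.Finite.exists_maximalFor (OrderDual.toDual : Ideal R → (Ideal R)ᵒᵈ)
    {q ∈ s | q ≤ p} hsub ⟨p, hp, le_rfl⟩
  refine ⟨m, ⟨hm.1, ?_⟩, hm.2⟩
  intro q hq hqm
  exact le_antisymm hqm (hmax ⟨hq, hqm.trans hm.2⟩ hqm)

theorem wl_fsf_aux {R : Type u} [CommRing R] [IsNoetherianRing R] (J : Ideal R) :
    ∀ (X : Type v) [AddCommGroup X] [Module R X],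
      (∀ N : Submodule R X, (associatedPrimes R (X ⧸ N)).Finite) →
      sInf {p ∈ associatedPrimes R X | ∀ q ∈ associatedPrimes R X, q ≤ p → q = p} = J →
      ∃ N : Submodule R X, N.FG ∧ (spSet R (X ⧸ N)).Finite := by
  classical
  refine IsWellFounded.induction ((· > ·) : Ideal R → Ideal R → Prop)
    (motive := fun J => ∀ (X : Type v) [AddCommGroup X] [Module R X],
      (∀ N : Submodule R X, (associatedPrimes R (X ⧸ N)).Finite) →
      sInf {p ∈ associatedPrimes R X | ∀ q ∈ associatedPrimes R X, q ≤ p → q = p} = J →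
      ∃ N : Submodule R X, N.FG ∧ (spSet R (X ⧸ N)).Finite) J ?_
  intro J IH X _ _ hWL hJ
  have hAfin : (associatedPrimes R X).Finite := by
    have := hWL ⊥
    rwa [LinearEquiv.AssociatedPrimes.eq (Submodule.quotEquivOfEqBot ⊥ rfl)] at this
  set minA := {p ∈ associatedPrimes R X |
    ∀ q ∈ associatedPrimes R X, q ≤ p → q = p} with hminA
  have hminAfin : minA.Finite := hAfin.subset (Set.sep_subset _ _)
  have F0 : ∀ p ∈ associatedPrimes R X, ∃ m ∈ minA, m ≤ p := by
    intro p hp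
    obtain ⟨m, hm, hmp⟩ := exists_minimal_le hAfin hp
    exact ⟨m, hm, hmp⟩
  set good : Ideal R → Prop :=
    fun p => ∃ N : Submodule R X, N.FG ∧ ∀ x : X ⧸ N, ¬ ((R ∙ x).annihilator ≤ p) with hgood
  have D1 : ∀ p ∈ minA, ¬ good p →
      ∀ N : Submodule R X, N.FG → ∃ x : X, ∀ r : R, r • x ∈ N ↔ r ∈ p := by
    intro p hpminA hbad N hN
    have hpprime : p.IsPrime := (hpminA.1 : IsAssociatedPrime p X).isPrime
    simp only [hgood] at hbad
    push_neg at hbad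
    obtain ⟨xb, hxb⟩ := hbad N hN
    have hpmin : p ∈ ((R ∙ xb).annihilator).minimalPrimes := by
      constructor
      · exact ⟨hpprime, hxb⟩
      · rintro q ⟨hqprime, hqle⟩ hqp
        have hqsp : q ∈ spSet R (X ⧸ N) := ⟨hqprime, xb, hqle⟩
        have hqspX : q ∈ spSet R X :=
          spSet_subset_of_surjective N.mkQ (Submodule.mkQ_surjective N) hqsp
        obtain ⟨a, haA, haq⟩ := exists_assoc_le_of_mem_spSet hqspX
        obtain ⟨m, hmminA, hma⟩ := F0 a haA
        have hmp : m = p := hpminA.2 m hmminA.1 ((hma.trans haq).trans hqp)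
        exact hmp ▸ (hma.trans haq)
    obtain ⟨_, yb, hyb⟩ := isAssociatedPrime_iff_ann.mp (isAssociatedPrime_of_mem_minimalPrimes hpmin)
    obtain ⟨y, rfl⟩ := Submodule.Quotient.mk_surjective N yb
    refine ⟨y, fun r => ?_⟩
    have h1 : (r • y ∈ N) ↔ (r • (Submodule.Quotient.mk y : X ⧸ N) = 0) := by
      rw [← Submodule.Quotient.mk_smul, Submodule.Quotient.mk_eq_zero]
    rw [h1, ← Submodule.mem_annihilator_span_singleton, ← hyb]
  have Vfin : ∀ p ∈ minA, ¬ good p → {q : Ideal R | q.IsPrime ∧ p ≤ q}.Finite := by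
    intro p hpminA hbad
    exact bad_cone_finite hWL ((hpminA.1 : IsAssociatedPrime p X).isPrime) (D1 p hpminA hbad)
  by_cases hex : ∃ p ∈ minA, good p
  · obtain ⟨p₀, hp₀minA, hp₀good⟩ := hex
    have hchoice : ∀ p : Ideal R, ∃ N : Submodule R X,
        N.FG ∧ (good p → ∀ x : X ⧸ N, ¬ ((R ∙ x).annihilator ≤ p)) := by
      intro p
      by_cases h : good p
      · obtain ⟨N, h1, h2⟩ := h
        exact ⟨N, h1, fun _ => h2⟩
      · exact ⟨⊥, Submodule.fg_bot, fun hg => absurd hg h⟩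
    choose cov hcovFG hcovProp using hchoice
    set goodsSet := {p ∈ minA | good p} with hgoods
    have hgoodsfin : goodsSet.Finite := hminAfin.subset (Set.sep_subset _ _)
    set N : Submodule R X := hgoodsfin.toFinset.sup cov with hN
    have hNFG : N.FG := by
      rw [hN]
      exact Finset.sup_induction Submodule.fg_bot (fun a ha b hb => Submodule.FG.sup ha hb)
        (fun b _ => hcovFG b)
    have hkill : ∀ p ∈ goodsSet, p ∉ spSet R (X ⧸ N) := by
      intro p hp hmem
      have hle : cov p ≤ N := Finset.le_sup (hgoodsfin.mem_toFinset.mpr hp)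
      have hsub : spSet R (X ⧸ N) ⊆ spSet R (X ⧸ (cov p)) := by
        refine spSet_subset_of_surjective (Submodule.mapQ (cov p) N LinearMap.id hle) ?_
        intro z
        obtain ⟨x, rfl⟩ := Submodule.Quotient.mk_surjective N z
        exact ⟨Submodule.Quotient.mk x, by simp [Submodule.mapQ_apply]⟩
      obtain ⟨hprime, x, hx⟩ := hsub hmem
      exact hcovProp p hp.2 x hx
    have hWL' : ∀ S : Submodule R (X ⧸ N), (associatedPrimes R ((X ⧸ N) ⧸ S)).Finite := by
      intro S
      have hle : N ≤ S.comap N.mkQ := by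
        intro z hz
        have h0 : N.mkQ z = 0 := (Submodule.Quotient.mk_eq_zero N).mpr hz
        simp [Submodule.mem_comap, h0]
      have hSmap : (S.comap N.mkQ).map N.mkQ = S :=
        Submodule.map_comap_eq_of_surjective (Submodule.mkQ_surjective N) S
      rw [← hSmap,
        LinearEquiv.AssociatedPrimes.eq (Submodule.quotientQuotientEquivQuotient N _ hle)]
      exact hWL _
    have hA'fin : (associatedPrimes R (X ⧸ N)).Finite := by
      have := hWL' ⊥
      rwa [LinearEquiv.AssociatedPrimes.eq (Submodule.quotEquivOfEqBot ⊥ rfl)] at this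
    set minA' := {p ∈ associatedPrimes R (X ⧸ N) |
      ∀ q ∈ associatedPrimes R (X ⧸ N), q ≤ p → q = p} with hminA'
    have hminA'fin : minA'.Finite := hA'fin.subset (Set.sep_subset _ _)
    have c1 : ∀ q ∈ associatedPrimes R (X ⧸ N), ∃ m ∈ minA, m ≤ q := by
      intro q hq
      have hqsp : q ∈ spSet R X :=
        spSet_subset_of_surjective N.mkQ (Submodule.mkQ_surjective N) (assoc_mem_spSet hq)
      obtain ⟨a, haA, haq⟩ := exists_assoc_le_of_mem_spSet hqsp
      obtain ⟨m, hm, hma⟩ := F0 a haA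
      exact ⟨m, hm, hma.trans haq⟩
    have c2 : ∀ q ∈ associatedPrimes R (X ⧸ N), ∀ p ∈ goodsSet, ¬ q ≤ p := by
      intro q hq p hpgoods hqp
      obtain ⟨m, hm, hmq⟩ := c1 q hq
      have hmp : m = p := hpgoods.1.2 m hm.1 (hmq.trans hqp)
      have hpq : p ≤ q := hmp ▸ hmq
      have hqeq : q = p := le_antisymm hqp hpq
      exact hkill p hpgoods (hqeq ▸ assoc_mem_spSet hq)
    have hJJ'le : J ≤ sInf minA' := by
      rw [← hJ]
      refine le_sInf ?_
      intro q hq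
      obtain ⟨m, hm, hmq⟩ := c1 q hq.1
      exact le_trans (sInf_le hm) hmq
    have hJne : J ≠ sInf minA' := by
      intro heq
      have hJp₀ : sInf minA' ≤ p₀ := heq ▸ (hJ ▸ sInf_le hp₀minA)
      obtain ⟨q, hq, hqp₀⟩ := exists_le_of_sInf_le hminA'fin
        ((hp₀minA.1 : IsAssociatedPrime p₀ X).isPrime) hJp₀
      exact c2 q hq.1 p₀ ⟨hp₀minA, hp₀good⟩ hqp₀
    have hJJ' : J < sInf minA' := lt_of_le_of_ne hJJ'le hJne
    obtain ⟨Nb, hNbFG, hNbsp⟩ := IH (sInf minA') hJJ' (X ⧸ N) hWL' rfl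
    have hleN : N ≤ Nb.comap N.mkQ := by
      intro z hz
      have h0 : N.mkQ z = 0 := (Submodule.Quotient.mk_eq_zero N).mpr hz
      simp [Submodule.mem_comap, h0]
    have hmapNb : (Nb.comap N.mkQ).map N.mkQ = Nb :=
      Submodule.map_comap_eq_of_surjective (Submodule.mkQ_surjective N) Nb
    have hcomapFG : (Nb.comap N.mkQ).FG := by
      refine Submodule.fg_of_fg_map_of_fg_inf_ker N.mkQ ?_ ?_
      · rw [hmapNb]; exact hNbFG
      · rw [Submodule.ker_mkQ]
        have heq : Nb.comap N.mkQ ⊓ N = N := inf_eq_right.mpr hleN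
        rw [heq]; exact hNFG
    refine ⟨Nb.comap N.mkQ, hcomapFG, ?_⟩
    have e := Submodule.quotientQuotientEquivQuotient N (Nb.comap N.mkQ) hleN
    rw [← spSet_eq_of_equiv e, hmapNb]
    exact hNbsp
  · push_neg at hex
    have hspfin : (spSet R X).Finite := by
      refine Set.Finite.subset (Set.Finite.biUnion hminAfin
        (fun p hp => Vfin p hp (hex p hp))) ?_
      intro q hq
      obtain ⟨a, haA, haq⟩ := exists_assoc_le_of_mem_spSet hq
      obtain ⟨m, hm, hma⟩ := F0 a haA
      exact Set.mem_biUnion hm ⟨hq.1, hma.trans haq⟩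
    refine ⟨⊥, Submodule.fg_bot, ?_⟩
    rwa [spSet_eq_of_equiv (Submodule.quotEquivOfEqBot ⊥ rfl)]

theorem wl_fsf {R : Type u} [CommRing R] [IsNoetherianRing R] (X : Type v) [AddCommGroup X]
    [Module R X] (hWL : ∀ N : Submodule R X, (associatedPrimes R (X ⧸ N)).Finite) :
    ∃ N : Submodule R X, N.FG ∧ (spSet R (X ⧸ N)).Finite :=
  wl_fsf_aux _ X hWL rfl

end Master
open Submodule

section Fibers

variable {R : Type*} [CommRing R]

lemma minimalPrimes_finite {T : Type*} [CommRing T] [IsNoetherianRing T] (I : Ideal T) :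
    I.minimalPrimes.Finite := by
  haveI : Module.Finite T (T ⧸ I) :=
    Module.Finite.of_surjective I.mkQ (Submodule.mkQ_surjective I)
  refine (associatedPrimes_finite_of_noetherian (R := T) (T ⧸ I)).subset ?_
  intro q hq
  have hann : (Submodule.span T {(Submodule.Quotient.mk (1 : T) : T ⧸ I)}).annihilator = I := by
    ext r
    rw [Submodule.mem_annihilator_span_singleton, ← Submodule.Quotient.mk_smul,
      Submodule.Quotient.mk_eq_zero]
    simp [smul_eq_mul]
  exact isAssociatedPrime_of_mem_minimalPrimes
    (x := (Submodule.Quotient.mk (1 : T) : T ⧸ I)) (by rwa [hann])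

lemma fiber_finite {T : Type*} [CommRing T] [IsNoetherianRing T] [Algebra R T]
    [Algebra.IsIntegral R T] (p : Ideal R) :
    {q : Ideal T | q.IsPrime ∧ q.comap (algebraMap R T) = p}.Finite := by
  refine (minimalPrimes_finite (p.map (algebraMap R T))).subset ?_
  rintro q ⟨hq, hcomap⟩
  constructor
  · exact ⟨hq, Ideal.map_le_iff_le_comap.mpr (le_of_eq hcomap.symm)⟩
  · rintro y ⟨hyprime, hymap⟩ hyq
    by_contra hqy
    obtain ⟨x, hxq, hxy⟩ := SetLike.not_le_iff_exists.mp hqy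
    haveI := hyprime
    have hlt := Ideal.comap_lt_comap_of_integral_mem_sdiff (I := y) (J := q) hyq
      ⟨hxq, hxy⟩ (Algebra.IsIntegral.isIntegral (R := R) x)
    have h1 : p ≤ y.comap (algebraMap R T) := fun a ha =>
      Ideal.mem_comap.mpr (hymap (Ideal.mem_map_of_mem _ ha))
    have h2 : y.comap (algebraMap R T) ≤ p := hcomap ▸ Ideal.comap_mono hyq
    rw [hcomap, le_antisymm h2 h1] at hlt
    exact lt_irrefl _ hlt

open TensorProduct in
lemma comap_mem_spSet {T : Type*} [CommRing T] [Algebra R T]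
    {W : Type*} [AddCommGroup W] [Module R W] {q : Ideal T}
    (hq : q ∈ spSet T (T ⊗[R] W)) : q.comap (algebraMap R T) ∈ spSet R W := by
  obtain ⟨hqprime, z, hz⟩ := hq
  haveI := hqprime
  have hpprime : (q.comap (algebraMap R T)).IsPrime := Ideal.comap_isPrime _ q
  refine ⟨hpprime, ?_⟩
  by_contra hcon
  push_neg at hcon
  have hone : (1 : R) ∉ q.comap (algebraMap R T) := fun h =>
    hpprime.ne_top (Ideal.eq_top_of_isUnit_mem _ h isUnit_one)
  set D : Submodule T (T ⊗[R] W) :=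
    { carrier := {w | ∃ s : R, s ∉ q.comap (algebraMap R T) ∧ algebraMap R T s • w = 0}
      zero_mem' := ⟨1, hone, smul_zero _⟩
      add_mem' := by
        rintro z₁ z₂ ⟨s₁, hs₁, h₁⟩ ⟨s₂, hs₂, h₂⟩
        refine ⟨s₁ * s₂, fun h => ?_, ?_⟩
        · rcases hpprime.mem_or_mem h with h | h
          exacts [hs₁ h, hs₂ h]
        · have e1 : (algebraMap R T (s₁ * s₂)) • z₁ = 0 := by
            rw [map_mul, mul_comm, mul_smul, h₁, smul_zero]
          have e2 : (algebraMap R T (s₁ * s₂)) • z₂ = 0 := by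
            rw [map_mul, mul_smul, h₂, smul_zero]
          rw [smul_add, e1, e2, add_zero]
      smul_mem' := by
        rintro t w ⟨s, hs, h⟩
        refine ⟨s, hs, ?_⟩
        rw [smul_comm, h, smul_zero] } with hD
  have htop : ∀ w : T ⊗[R] W, w ∈ D := by
    intro w
    have hsub : Submodule.span R {t : T ⊗[R] W | ∃ x y, x ⊗ₜ y = t} ≤ D.restrictScalars R := by
      rw [Submodule.span_le]
      rintro _ ⟨t, y, rfl⟩
      obtain ⟨s, hsann, hsp⟩ := SetLike.not_le_iff_exists.mp (hcon y)
      have hsy : s • y = 0 := (Submodule.mem_annihilator_span_singleton _ _).mp hsann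
      refine ⟨s, hsp, ?_⟩
      rw [TensorProduct.smul_tmul', smul_eq_mul, ← Algebra.smul_def, TensorProduct.smul_tmul,
        hsy, TensorProduct.tmul_zero]
    have hw : w ∈ Submodule.span R {t : T ⊗[R] W | ∃ x y, x ⊗ₜ y = t} := by
      rw [TensorProduct.span_tmul_eq_top]; exact Submodule.mem_top
    exact hsub hw
  obtain ⟨s, hsp, hs0⟩ := htop z
  apply hsp
  have hmem : algebraMap R T s ∈ (T ∙ z).annihilator :=
    (Submodule.mem_annihilator_span_singleton _ _).mpr hs0
  exact Ideal.mem_comap.mpr (hz hmem)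

end Fibers

open TensorProduct

/-- An `R`-module `M` is *weakly Laskerian* if every quotient of `M` has only finitely many
associated prime ideals. -/
def IsWeaklyLaskerian (R : Type*) [CommRing R] (M : Type*) [AddCommGroup M]
    [Module R M] : Prop :=
  ∀ N : Submodule R M, (associatedPrimes R (M ⧸ N)).Finite

/-- The `T`-module structure on `M ⊗[R] T`, obtained by transporting the standard
`T`-module structure on `T ⊗[R] M` along the commutativity isomorphism. -/
noncomputable def tensorRightModule (R M T : Type*) [CommRing R] [AddCommGroup M]
    [Module R M] [CommRing T] [Algebra R T] : Module T (TensorProduct R M T) :=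
  letI e : TensorProduct R M T ≃+ TensorProduct R T M := (TensorProduct.comm R M T).toAddEquiv
  letI : SMul T (TensorProduct R M T) := ⟨fun t x => e.symm (t • e x)⟩
  Function.Injective.module T e.toAddMonoidHom e.injective
    (fun t x => show e (e.symm (t • e x)) = t • e x by simp)


/-- Let `R` be a Noetherian commutative ring, `M` a weakly Laskerian `R`-module, and `T` a
Noetherian commutative `R`-algebra with only finitely many maximal ideals which is
integral over `R`. Then `M ⊗[R] T` is a weakly Laskerian `T`-module. -/
theorem tensorProduct_isWeaklyLaskerian {R : Type*} [CommRing R] [IsNoetherianRing R]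
    (M : Type*) [AddCommGroup M] [Module R M] (hM : IsWeaklyLaskerian R M)
    (T : Type*) [CommRing T] [Algebra R T] [IsNoetherianRing T]
    (hsl : {I : Ideal T | I.IsMaximal}.Finite) [Algebra.IsIntegral R T] :
    letI := tensorRightModule R M T
    IsWeaklyLaskerian T (TensorProduct R M T) := by
  letI := tensorRightModule R M T
  -- Weak Laskerianness of the standard base change `T ⊗[R] M`.
  have hZ : ∀ S : Submodule T (T ⊗[R] M), (associatedPrimes T ((T ⊗[R] M) ⧸ S)).Finite := by
    obtain ⟨N₀, hN₀fg, hN₀sp⟩ := wl_fsf M hM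
    haveI : Module.Finite R ↥N₀ := Module.Finite.iff_fg.mpr hN₀fg
    set ι : ↥N₀ →ₗ[R] M := N₀.subtype with hι
    set π : (T ⊗[R] M) →ₗ[T] (T ⊗[R] (M ⧸ N₀)) := (N₀.mkQ).baseChange T with hπ
    have hπsurj : Function.Surjective π := by
      have h := LinearMap.lTensor_surjective T (Submodule.mkQ_surjective N₀)
      rwa [← LinearMap.baseChange_eq_ltensor] at h
    have hexact : Function.Exact (ι.baseChange T) π :=
      lTensor_exact T (LinearMap.exact_subtype_mkQ N₀) (Submodule.mkQ_surjective N₀)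
    set Y : Submodule T (T ⊗[R] M) := LinearMap.range (ι.baseChange T) with hY
    have hker : LinearMap.ker π = Y := by
      rw [LinearMap.exact_iff] at hexact
      rw [hexact, hY]
    have hYfg : Y.FG := Module.Finite.iff_fg.mp inferInstance
    have hspquot : (spSet T ((T ⊗[R] M) ⧸ Y)).Finite := by
      have e2 : ((T ⊗[R] M) ⧸ Y) ≃ₗ[T] (T ⊗[R] (M ⧸ N₀)) :=
        (Submodule.quotEquivOfEq Y (LinearMap.ker π) hker.symm).trans
          (π.quotKerEquivOfSurjective hπsurj)
      rw [spSet_eq_of_equiv e2]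
      refine Set.Finite.subset (Set.Finite.biUnion hN₀sp
        (fun p _ => fiber_finite (R := R) p)) ?_
      intro q hq
      exact Set.mem_biUnion (comap_mem_spSet hq) ⟨hq.1, rfl⟩
    intro S
    set Wsub : Submodule T ((T ⊗[R] M) ⧸ S) := Y.map S.mkQ with hW
    haveI : Module.Finite T ↥Wsub := Module.Finite.iff_fg.mpr (hYfg.map _)
    have finW : (associatedPrimes T ↥Wsub).Finite :=
      associatedPrimes_finite_of_noetherian (R := T) ↥Wsub
    have hmapbotS : S.map S.mkQ = ⊥ := by
      rw [eq_bot_iff]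
      rintro _ ⟨y, hy, rfl⟩
      simpa [Submodule.Quotient.mk_eq_zero] using hy
    have hmapeq : (Y ⊔ S).map S.mkQ = Wsub := by
      rw [Submodule.map_sup, hmapbotS, sup_bot_eq, hW]
    have e3 : (((T ⊗[R] M) ⧸ S) ⧸ Wsub) ≃ₗ[T] ((T ⊗[R] M) ⧸ (Y ⊔ S)) :=
      (Submodule.quotEquivOfEq Wsub ((Y ⊔ S).map S.mkQ) hmapeq.symm).trans
        (Submodule.quotientQuotientEquivQuotient S (Y ⊔ S) le_sup_right)
    have hthird : (associatedPrimes T (((T ⊗[R] M) ⧸ S) ⧸ Wsub)).Finite := by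
      rw [LinearEquiv.AssociatedPrimes.eq e3]
      refine hspquot.subset ?_
      intro q hq
      have hq' : q ∈ spSet T ((T ⊗[R] M) ⧸ (Y ⊔ S)) := assoc_mem_spSet hq
      refine spSet_subset_of_surjective (Submodule.mapQ Y (Y ⊔ S) LinearMap.id le_sup_left)
        ?_ hq'
      intro z
      obtain ⟨x, rfl⟩ := Submodule.Quotient.mk_surjective _ z
      exact ⟨Submodule.Quotient.mk x, by simp [Submodule.mapQ_apply]⟩
    exact ((finW.union hthird).subset (assoc_subset_union Wsub))
  -- Transport along the commutativity equivalence.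
  have hsmul : ∀ (t : T) (x : TensorProduct R M T),
      (TensorProduct.comm R M T) (t • x) = t • ((TensorProduct.comm R M T) x) := by
    intro t x
    exact (TensorProduct.comm R M T).apply_symm_apply _
  let E : (TensorProduct R M T) ≃ₗ[T] (T ⊗[R] M) :=
    { (TensorProduct.comm R M T).toAddEquiv with
      map_smul' := hsmul }
  show IsWeaklyLaskerian T (TensorProduct R M T)
  intro S
  rw [LinearEquiv.AssociatedPrimes.eq
    (Submodule.Quotient.equiv S (S.map (E : TensorProduct R M T →ₗ[T] T ⊗[R] M)) E rfl)]
  exact hZ _
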